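/- Let Δ : [0,∞) → ℝ be continuous and γ > 0. Suppose there exist κ > 0 and a > 0 such that for every t₀ ≥ 0 and every differentiable x : [0,∞) → ℝ with x'(t) = −γ·Δ(t)²·x(t) for all t ≥ 0, one has |x(t)| ≤ κ·e^{−a·(t−t₀)}·|x(t₀)| for all t ≥ t₀. Then Δ is PE, i.e., there exist T > 0 and δ > 0 such that ∫_t^{t+T} Δ(s)² ds ≥ δ for all t ≥ 0. -/

import Mathlib

open MeasureTheory

/-- Feature F2, necessity: If the DREM error equation
`x' = -γ Δ(t)² x` is uniformly globally exponentially stable, then `Δ` is PE. -/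
theorem drem_exponential_stability_implies_pe (Δ : ℝ → ℝ) (γ : ℝ)
    (hγ : 0 < γ) (hΔ : Continuous Δ)
    (hGES : ∃ κ > (0:ℝ), ∃ a > (0:ℝ), ∀ t₀, 0 ≤ t₀ → ∀ x : ℝ → ℝ,
      (∀ t, 0 ≤ t → HasDerivAt x (-γ * (Δ t) ^ 2 * x t) t) →
      ∀ t, t₀ ≤ t → |x t| ≤ κ * Real.exp (-a * (t - t₀)) * |x t₀|) :
    ∃ T > (0:ℝ), ∃ δ > (0:ℝ), ∀ t, 0 ≤ t → δ ≤ ∫ s in t..t + T, (Δ s) ^ 2 := by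
  obtain ⟨κ, hκ, a, ha, hG⟩ := hGES
  set f : ℝ → ℝ := fun s => (Δ s) ^ 2 with hf
  have hfc : Continuous f := hΔ.pow 2
  set F : ℝ → ℝ := fun u => ∫ s in (0:ℝ)..u, f s with hF
  have hFd : ∀ t : ℝ, HasDerivAt F (f t) t := fun t =>
    (hfc.integral_hasStrictDerivAt 0 t).hasDerivAt
  set x : ℝ → ℝ := fun u => Real.exp (-γ * F u) with hx
  have hxd : ∀ t, 0 ≤ t → HasDerivAt x (-γ * (Δ t) ^ 2 * x t) t := by
    intro t _
    have h1 : HasDerivAt (fun u => -γ * F u) (-γ * f t) t := (hFd t).const_mul (-γ)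
    have := h1.exp
    convert this using 1
    ring
  have hT : (0:ℝ) < (|Real.log κ| + 1) / a := by positivity
  refine ⟨(|Real.log κ| + 1) / a, hT, 1 / γ, by positivity, ?_⟩
  intro t ht
  set T := (|Real.log κ| + 1) / a with hTdef
  have key := hG t ht x hxd (t + T) (by linarith)
  have hxpos : ∀ u, 0 < x u := fun u => Real.exp_pos _
  rw [abs_of_pos (hxpos _), abs_of_pos (hxpos _)] at key
  have hsub : F (t + T) - F t = ∫ s in t..t + T, f s := by
    rw [hF]
    exact intervalIntegral.integral_interval_sub_left
      (hfc.intervalIntegrable _ _) (hfc.intervalIntegrable _ _)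
  -- key : exp(-γ F(t+T)) ≤ κ * exp(-a T) * exp(-γ F t)
  have hlog : -γ * F (t + T) ≤ Real.log κ + (-a * (t + T - t)) + (-γ * F t) := by
    have : Real.exp (-γ * F (t + T)) ≤
        Real.exp (Real.log κ + (-a * (t + T - t)) + (-γ * F t)) := by
      rw [Real.exp_add, Real.exp_add, Real.exp_log hκ]
      exact key
    exact (Real.exp_le_exp.mp this)
  have haT : a * T = |Real.log κ| + 1 := by
    rw [hTdef]
    field_simp [ha.ne']
  have hI : a * T - Real.log κ ≤ γ * (F (t + T) - F t) := by nlinarith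
  have hge : 1 ≤ γ * ∫ s in t..t + T, f s := by
    rw [← hsub]
    have : Real.log κ ≤ |Real.log κ| := le_abs_self _
    nlinarith
  rw [div_le_iff₀ hγ] at *
  nlinarith [hge]
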